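/- On the Poincaré disk 𝔻 = (D, G) with metric G of Gaussian curvature -1, for every B ∈ ℝ³ the function Λ_B(u) = (B, Ξ(u)) satisfies the Hesse equation Hess_G(Λ_B) = G·Λ_B, where Ξ is the Weierstrass map and (·,·) the Minkowski pairing of signature (1,2). -/

import Mathlib

set_option maxHeartbeats 2000000


/-- Partial derivative ∂_i f at x. -/
noncomputable def pd {n : ℕ} (i : Fin n) (f : (Fin n → ℝ) → ℝ) (x : Fin n → ℝ) : ℝ :=
  fderiv ℝ f x (Pi.single i 1)

open Finset in
/-- Christoffel symbols Γ^i_{jk} of the Levi-Civita connection of the metric g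
(with inverse ginv), in local coordinates. -/
noncomputable def Gamma {n : ℕ} (g ginv : (Fin n → ℝ) → Matrix (Fin n) (Fin n) ℝ)
    (x : Fin n → ℝ) (i j k : Fin n) : ℝ :=
  (1 / 2) * ∑ l, ginv x i l *
    (pd j (fun y => g y l k) x + pd k (fun y => g y l j) x - pd l (fun y => g y j k) x)

/-- The open unit disk in ℝ² ≅ ℂ. -/
def diskR : Set (Fin 2 → ℝ) := {x | x 0 ^ 2 + x 1 ^ 2 < 1}

/-- The Poincaré metric G = 4|du|²/(1-|u|²)² (Gaussian curvature -1) on the unit disk. -/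
noncomputable def gP (x : Fin 2 → ℝ) : Matrix (Fin 2) (Fin 2) ℝ :=
  fun i j => if i = j then 4 / (1 - (x 0 ^ 2 + x 1 ^ 2)) ^ 2 else 0

/-- The inverse Poincaré metric. -/
noncomputable def gPinv (x : Fin 2 → ℝ) : Matrix (Fin 2) (Fin 2) ℝ :=
  fun i j => if i = j then (1 - (x 0 ^ 2 + x 1 ^ 2)) ^ 2 / 4 else 0

/-- The Minkowski pairing of signature (1,2) on ℝ³. -/
noncomputable def mink (x y : Fin 3 → ℝ) : ℝ := -(x 0 * y 0) + x 1 * y 1 + x 2 * y 2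

/-- The Weierstrass map Ξ in real coordinates on the unit disk. -/
noncomputable def XiR (x : Fin 2 → ℝ) : Fin 3 → ℝ :=
  ![(1 + (x 0 ^ 2 + x 1 ^ 2)) / (1 - (x 0 ^ 2 + x 1 ^ 2)),
    2 * x 0 / (1 - (x 0 ^ 2 + x 1 ^ 2)),
    2 * x 1 / (1 - (x 0 ^ 2 + x 1 ^ 2))]

/-- Λ_B = (B, Ξ(·)). -/
noncomputable def LB (B : Fin 3 → ℝ) (x : Fin 2 → ℝ) : ℝ := mink B (XiR x)

/-! ### Auxiliary machinery -/

lemma pd_eq {n : ℕ} {f : (Fin n → ℝ) → ℝ} {L : (Fin n → ℝ) →L[ℝ] ℝ} {x : Fin n → ℝ}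
    (h : HasFDerivAt f L x) (i : Fin n) : pd i f x = L (Pi.single i 1) := by
  unfold pd; rw [h.fderiv]

lemma pd_congr {n : ℕ} {f g : (Fin n → ℝ) → ℝ} {x : Fin n → ℝ}
    (h : f =ᶠ[nhds x] g) (i : Fin n) : pd i f x = pd i g x := by
  unfold pd; rw [h.fderiv_eq]

lemma pd_const {n : ℕ} (c : ℝ) (i : Fin n) (x : Fin n → ℝ) :
    pd i (fun _ => c) x = 0 := by
  unfold pd; simp

lemma hasFDerivAt_div' {n : ℕ} {f g : (Fin n → ℝ) → ℝ} {f' g' : (Fin n → ℝ) →L[ℝ] ℝ}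
    {x : Fin n → ℝ} (hf : HasFDerivAt f f' x) (hg : HasFDerivAt g g' x) (hx : g x ≠ 0) :
    HasFDerivAt (fun y => f y / g y) ((g x)⁻¹ • f' + (-(f x) / g x ^ 2) • g') x := by
  have h := hf.mul ((hasFDerivAt_inv' (𝕜 := ℝ) hx).comp x hg)
  have e : (fun y => f y / g y) = fun y => f y * (Inv.inv ∘ g) y := by
    funext y; simp [div_eq_mul_inv, Function.comp]
  rw [e]
  refine h.congr_fderiv ?_
  ext v
  simp [Function.comp]
  field_simp
  ring

noncomputable def pr (i : Fin 2) : (Fin 2 → ℝ) →L[ℝ] ℝ := ContinuousLinearMap.proj i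

noncomputable def DOf (y : Fin 2 → ℝ) : ℝ := 1 - (y 0 * y 0 + y 1 * y 1)

noncomputable def NOf (B : Fin 3 → ℝ) (y : Fin 2 → ℝ) : ℝ :=
  -(B 0) * (1 + (y 0 * y 0 + y 1 * y 1)) + 2 * B 1 * y 0 + 2 * B 2 * y 1

lemma DOf_eq (y : Fin 2 → ℝ) : DOf y = 1 - (y 0 ^ 2 + y 1 ^ 2) := by unfold DOf; ring

lemma LB_eq (B : Fin 3 → ℝ) (y : Fin 2 → ℝ) : LB B y = NOf B y / DOf y := by
  have e : (1 : ℝ) - (y 0 ^ 2 + y 1 ^ 2) = DOf y := (DOf_eq y).symm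
  by_cases h : DOf y = 0
  · simp [LB, mink, XiR, e, h]
  · rw [← e] at h
    simp only [LB, mink, XiR, Matrix.cons_val_zero, Matrix.cons_val_one, Matrix.cons_val_two, Matrix.head_cons, Matrix.tail_cons]
    rw [e]
    field_simp
    unfold NOf DOf
    ring

/-- First partials of Λ_B. -/
noncomputable def F0 (B : Fin 3 → ℝ) (y : Fin 2 → ℝ) : ℝ :=
  ((-(2 * B 0 * y 0) + 2 * B 1) * DOf y + 2 * y 0 * NOf B y) / (DOf y * DOf y)

noncomputable def F1 (B : Fin 3 → ℝ) (y : Fin 2 → ℝ) : ℝ :=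
  ((-(2 * B 0 * y 1) + 2 * B 2) * DOf y + 2 * y 1 * NOf B y) / (DOf y * DOf y)

lemma pd_LB (B : Fin 3 → ℝ) (y : Fin 2 → ℝ) (hy : DOf y ≠ 0) :
    pd 0 (LB B) y = F0 B y ∧ pd 1 (LB B) y = F1 B y := by
  have hy' : (1:ℝ) - (y 0 * y 0 + y 1 * y 1) ≠ 0 := hy
  have hs := (((pr 0).hasFDerivAt (x := y)).mul ((pr 0).hasFDerivAt)).add
      (((pr 1).hasFDerivAt (x := y)).mul ((pr 1).hasFDerivAt))
  have hN := ((hs.const_add 1).const_mul (-(B 0))).add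
      (((pr 0).hasFDerivAt (x := y)).const_mul (2 * B 1)) |>.add
      (((pr 1).hasFDerivAt (x := y)).const_mul (2 * B 2))
  have hD := hs.const_sub 1
  have hq := hasFDerivAt_div' hN hD hy
  have e : LB B = fun z => NOf B z / DOf z := funext (LB_eq B)
  rw [e]
  constructor
  · have h0 : pd 0 (fun z => NOf B z / DOf z) y = _ := pd_eq hq 0
    rw [h0]
    unfold F0 NOf DOf
    simp only [ContinuousLinearMap.add_apply, ContinuousLinearMap.coe_smul',
      ContinuousLinearMap.neg_apply, Pi.smul_apply, smul_eq_mul, pr,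
      ContinuousLinearMap.proj_apply, Pi.single_apply]
    norm_num
    field_simp
    ring
  · have h1 : pd 1 (fun z => NOf B z / DOf z) y = _ := pd_eq hq 1
    rw [h1]
    unfold F1 NOf DOf
    simp only [ContinuousLinearMap.add_apply, ContinuousLinearMap.coe_smul',
      ContinuousLinearMap.neg_apply, Pi.smul_apply, smul_eq_mul, pr,
      ContinuousLinearMap.proj_apply, Pi.single_apply]
    norm_num
    field_simp
    ring

/-- Partials of the diagonal metric coefficient. -/
lemma pd_gP (x : Fin 2 → ℝ) (hx' : DOf x ≠ 0) (i l k : Fin 2) :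
    pd i (fun y => gP y l k) x = if l = k then 16 * x i / DOf x ^ 3 else 0 := by
  have hx2 : (1:ℝ) - (x 0 * x 0 + x 1 * x 1) ≠ 0 := hx'
  by_cases h : l = k
  · subst h
    rw [if_pos rfl]
    have e : (fun y => gP y l l) =
        fun y : Fin 2 → ℝ => (4:ℝ) / ((1 - (y 0 * y 0 + y 1 * y 1)) * (1 - (y 0 * y 0 + y 1 * y 1))) := by
      funext y
      show (if l = l then (4:ℝ) / (1 - (y 0 ^ 2 + y 1 ^ 2)) ^ 2 else 0) = _
      rw [if_pos rfl]
      ring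
    rw [e]
    have hs := (((pr 0).hasFDerivAt (x := x)).mul ((pr 0).hasFDerivAt)).add
        (((pr 1).hasFDerivAt (x := x)).mul ((pr 1).hasFDerivAt))
    have hD := hs.const_sub 1
    have h4 := hasFDerivAt_div' (hasFDerivAt_const (4:ℝ) x) (hD.mul hD) (mul_ne_zero hx' hx')
    have hp : pd i (fun y : Fin 2 → ℝ =>
        (4:ℝ) / ((1 - (y 0 * y 0 + y 1 * y 1)) * (1 - (y 0 * y 0 + y 1 * y 1)))) x = _ :=
      pd_eq h4 i
    rw [hp]
    unfold DOf
    fin_cases i <;>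
    · simp only [ContinuousLinearMap.add_apply, ContinuousLinearMap.coe_smul',
        ContinuousLinearMap.neg_apply, Pi.smul_apply, smul_eq_mul, pr,
        ContinuousLinearMap.proj_apply, ContinuousLinearMap.zero_apply, Pi.single_apply,
        ContinuousLinearMap.coe_mul]
      norm_num
      field_simp
      ring
  · rw [if_neg h]
    have e : (fun y => gP y l k) = fun _ : Fin 2 → ℝ => (0:ℝ) := by
      funext y; simp [gP, h]
    rw [e, pd_const]

lemma Gamma_val (x : Fin 2 → ℝ) (hx' : DOf x ≠ 0) (k i j : Fin 2) :
    Gamma gP gPinv x k i j =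
      2 * ((if k = j then x i else 0) + (if k = i then x j else 0)
        - (if i = j then x k else 0)) / DOf x := by
  have hx2 : (1:ℝ) - (x 0 ^ 2 + x 1 ^ 2) ≠ 0 := by rw [← DOf_eq]; exact hx'
  unfold Gamma
  rw [Fin.sum_univ_two]
  simp only [pd_gP x hx']
  fin_cases k <;> fin_cases i <;> fin_cases j <;>
  · simp [gPinv, DOf_eq]
    field_simp
    ring

open Finset in
/-- on the Poincaré disk of curvature -1, every Λ_B(u) = (B,Ξ(u))
satisfies the Hesse equation Hess_G(Λ_B) = G·Λ_B. -/
theorem LB_satisfies_hesse_equation (B : Fin 3 → ℝ) (x : Fin 2 → ℝ) (hx : x ∈ diskR)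
    (i j : Fin 2) :
    pd i (fun y => pd j (LB B) y) x - (∑ k, Gamma gP gPinv x k i j * pd k (LB B) x)
      = gP x i j * LB B x := by
  have hxm : x 0 ^ 2 + x 1 ^ 2 < 1 := hx
  have hx' : DOf x ≠ 0 := by unfold DOf; nlinarith
  have hx2 : (1:ℝ) - (x 0 * x 0 + x 1 * x 1) ≠ 0 := hx'
  have hx3 : (1:ℝ) - (x 0 ^ 2 + x 1 ^ 2) ≠ 0 := by rw [← DOf_eq]; exact hx'
  have hcont : Continuous DOf := by
    unfold DOf
    exact continuous_const.sub
      (((continuous_apply 0).mul (continuous_apply 0)).add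
       ((continuous_apply 1).mul (continuous_apply 1)))
  have hne : ∀ᶠ y in nhds x, DOf y ≠ 0 := hcont.continuousAt.eventually_ne hx'
  have hev0 : (fun y => pd 0 (LB B) y) =ᶠ[nhds x] F0 B := by
    filter_upwards [hne] with y hy using (pd_LB B y hy).1
  have hev1 : (fun y => pd 1 (LB B) y) =ᶠ[nhds x] F1 B := by
    filter_upwards [hne] with y hy using (pd_LB B y hy).2
  -- derivative machinery at x
  have hs := (((pr 0).hasFDerivAt (x := x)).mul ((pr 0).hasFDerivAt)).add
      (((pr 1).hasFDerivAt (x := x)).mul ((pr 1).hasFDerivAt))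
  have hN := ((hs.const_add 1).const_mul (-(B 0))).add
      (((pr 0).hasFDerivAt (x := x)).const_mul (2 * B 1)) |>.add
      (((pr 1).hasFDerivAt (x := x)).const_mul (2 * B 2))
  have hD := hs.const_sub 1
  have hP0 := ((((pr 0).hasFDerivAt (x := x)).const_mul (2 * B 0)).neg.add_const (2 * B 1)).mul hD
    |>.add ((((pr 0).hasFDerivAt (x := x)).const_mul 2).mul hN)
  have hP1 := ((((pr 1).hasFDerivAt (x := x)).const_mul (2 * B 0)).neg.add_const (2 * B 2)).mul hD
    |>.add ((((pr 1).hasFDerivAt (x := x)).const_mul 2).mul hN)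
  have hF0 := hasFDerivAt_div' hP0 (hD.mul hD) (mul_ne_zero hx' hx')
  have hF1 := hasFDerivAt_div' hP1 (hD.mul hD) (mul_ne_zero hx' hx')
  rw [Fin.sum_univ_two, (pd_LB B x hx').1, (pd_LB B x hx').2,
    Gamma_val x hx' 0 i j, Gamma_val x hx' 1 i j, LB_eq B x]
  fin_cases i <;> fin_cases j
  · show pd 0 (fun y => pd 0 (LB B) y) x - _ = _
    rw [pd_congr hev0 0]
    have h2 : pd 0 (F0 B) x = _ := pd_eq hF0 0
    rw [h2]
    unfold F0 F1 NOf DOf gP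
    simp only [ContinuousLinearMap.add_apply, ContinuousLinearMap.coe_smul',
      ContinuousLinearMap.neg_apply, Pi.smul_apply, smul_eq_mul, pr,
      ContinuousLinearMap.proj_apply, Pi.single_apply]
    norm_num
    field_simp
    ring
  · show pd 0 (fun y => pd 1 (LB B) y) x - _ = _
    rw [pd_congr hev1 0]
    have h2 : pd 0 (F1 B) x = _ := pd_eq hF1 0
    rw [h2]
    unfold F0 F1 NOf DOf gP
    simp only [ContinuousLinearMap.add_apply, ContinuousLinearMap.coe_smul',
      ContinuousLinearMap.neg_apply, Pi.smul_apply, smul_eq_mul, pr,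
      ContinuousLinearMap.proj_apply, Pi.single_apply]
    norm_num
    field_simp
    ring
  · show pd 1 (fun y => pd 0 (LB B) y) x - _ = _
    rw [pd_congr hev0 1]
    have h2 : pd 1 (F0 B) x = _ := pd_eq hF0 1
    rw [h2]
    unfold F0 F1 NOf DOf gP
    simp only [ContinuousLinearMap.add_apply, ContinuousLinearMap.coe_smul',
      ContinuousLinearMap.neg_apply, Pi.smul_apply, smul_eq_mul, pr,
      ContinuousLinearMap.proj_apply, Pi.single_apply]
    norm_num
    field_simp
    ring
  · show pd 1 (fun y => pd 1 (LB B) y) x - _ = _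
    rw [pd_congr hev1 1]
    have h2 : pd 1 (F1 B) x = _ := pd_eq hF1 1
    rw [h2]
    unfold F0 F1 NOf DOf gP
    simp only [ContinuousLinearMap.add_apply, ContinuousLinearMap.coe_smul',
      ContinuousLinearMap.neg_apply, Pi.smul_apply, smul_eq_mul, pr,
      ContinuousLinearMap.proj_apply, Pi.single_apply]
    norm_num
    field_simp
    ring
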